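/- Σ_{n ≤ x} φ^{(e)}(n)/φ^{(e)*}(n) = x · Π_p (1 + Σ_{a=4}^∞ (φ(a)/φ^*(a) − φ(a−1)/φ^*(a−1)) / p^a) + O(x^{1/4} log x), where φ is Euler's totient function, φ^* is multiplicative with φ^*(p^a) = p^a − 1, and the product is over all primes p. -/

import Mathlib

open scoped Classical BigOperators

/-- `d` is a unitary divisor of `m`: `d ∣ m` and `gcd (d, m/d) = 1`. -/
def IsUnitaryDivisor (d m : ℕ) : Prop := d ∣ m ∧ Nat.gcd d (m / d) = 1

/-- `ω m` is the number of distinct prime divisors of `m`. -/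
def omega (m : ℕ) : ℕ := m.primeFactors.card

/-- `d` is an exponential unitary divisor of `n`: `d` has the same prime factors as `n`
and, at each such prime, the exponent of `d` is a unitary divisor of the exponent of `n`.
By convention `1` is the only e-unitary divisor of `1`. -/
def IsExpUnitaryDivisor (d n : ℕ) : Prop :=
  0 < d ∧ 0 < n ∧ d.primeFactors = n.primeFactors ∧
    ∀ p ∈ n.primeFactors, IsUnitaryDivisor (d.factorization p) (n.factorization p)

/-- `d` is an exponential divisor of `n`. -/
def IsExpDivisor (d n : ℕ) : Prop :=
  0 < d ∧ 0 < n ∧ d.primeFactors = n.primeFactors ∧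
    ∀ p ∈ n.primeFactors, d.factorization p ∣ n.factorization p

/-- the sum of the e-unitary divisors of `n` -/
noncomputable def sigmaEStar (n : ℕ) : ℕ :=
  ∑ d ∈ n.divisors.filter (fun d => IsExpUnitaryDivisor d n), d

/-- the number of the e-unitary divisors of `n` -/
noncomputable def tauEStar (n : ℕ) : ℕ :=
  (n.divisors.filter (fun d => IsExpUnitaryDivisor d n)).card

/-- the sum of the e-divisors of `n` -/
noncomputable def sigmaE (n : ℕ) : ℕ :=
  ∑ d ∈ n.divisors.filter (fun d => IsExpDivisor d n), d

/-- the number of the e-divisors of `n` -/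
noncomputable def tauE (n : ℕ) : ℕ :=
  (n.divisors.filter (fun d => IsExpDivisor d n)).card

/-- the number of unitary divisors of `m` -/
noncomputable def tauStar (m : ℕ) : ℕ :=
  (m.divisors.filter (fun d => IsUnitaryDivisor d m)).card

/-- the unitary analogue `φ*` of Euler's function: multiplicative with `φ*(p^a) = p^a - 1` -/
def phiStar (m : ℕ) : ℕ := ∏ p ∈ m.primeFactors, (p ^ m.factorization p - 1)

/-- the e-unitary Euler function `φ^{(e)*}` -/
def phiEStar (n : ℕ) : ℕ := ∏ p ∈ n.primeFactors, phiStar (n.factorization p)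

/-- the exponential Euler function `φ^{(e)}` -/
def phiE (n : ℕ) : ℕ := ∏ p ∈ n.primeFactors, Nat.totient (n.factorization p)

/-- the exponential unitary analogue of the Möbius function -/
def muEStar (n : ℕ) : ℤ := (-1) ^ (∑ p ∈ n.primeFactors, omega (n.factorization p))

open Finset
set_option maxHeartbeats 1600000

noncomputable section AuxEE

/-- ratio φ(a)/φ*(a) -/
def rrEE (a : ℕ) : ℝ := (Nat.totient a : ℝ) / (phiStar a : ℝ)

lemma two_le_pow_factorization {a p : ℕ} (hp : p ∈ a.primeFactors) :
    2 ≤ p ^ a.factorization p := by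
  have hp' : p.Prime := Nat.prime_of_mem_primeFactors hp
  have ha : a ≠ 0 := by rintro rfl; simp at hp
  have he : 1 ≤ a.factorization p :=
    (Nat.Prime.factorization_pos_of_dvd hp' ha (Nat.dvd_of_mem_primeFactors hp))
  calc 2 ≤ p := hp'.two_le
  _ = p ^ 1 := (pow_one p).symm
  _ ≤ p ^ a.factorization p := Nat.pow_le_pow_right hp'.pos he

lemma phiStar_pos (a : ℕ) : 0 < phiStar a := by
  apply Finset.prod_pos
  intro p hp
  have := two_le_pow_factorization hp
  omega

lemma totient_le_phiStar (a : ℕ) : Nat.totient a ≤ phiStar a := by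
  rcases Nat.eq_zero_or_pos a with rfl | ha
  · simp [phiStar]
  rw [Nat.totient_eq_prod_factorization (by omega), Finsupp.prod,
    Nat.support_factorization, phiStar]
  apply Finset.prod_le_prod'
  intro p hp
  have hp' : p.Prime := Nat.prime_of_mem_primeFactors hp
  have he : 1 ≤ a.factorization p :=
    (Nat.Prime.factorization_pos_of_dvd hp' (by omega) (Nat.dvd_of_mem_primeFactors hp))
  set k := a.factorization p with hk
  have h1 : p ^ (k - 1) * p = p ^ k := by
    rw [← pow_succ]; congr 1; omega
  have h2 : p ^ (k - 1) * (p - 1) = p ^ k - p ^ (k - 1) := by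
    rw [Nat.mul_sub, mul_one, h1]
  rw [h2]
  have h3 : 1 ≤ p ^ (k - 1) := Nat.one_le_pow _ _ hp'.pos
  omega

lemma rrEE_nonneg (a : ℕ) : 0 ≤ rrEE a := by rw [rrEE]; positivity

lemma rrEE_le_one (a : ℕ) : rrEE a ≤ 1 := by
  rw [rrEE, div_le_one (by exact_mod_cast phiStar_pos a)]
  exact_mod_cast totient_le_phiStar a

lemma rrEE_one : rrEE 1 = 1 := by norm_num [rrEE, phiStar]
lemma rrEE_two : rrEE 2 = 1 := by
  have h2 : Nat.primeFactors 2 = {2} := Nat.Prime.primeFactors Nat.prime_two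
  norm_num [rrEE, phiStar, h2, Nat.Prime.factorization_self Nat.prime_two]
lemma rrEE_three : rrEE 3 = 1 := by
  have h3 : Nat.primeFactors 3 = {3} := Nat.Prime.primeFactors Nat.prime_three
  norm_num [rrEE, phiStar, h3, Nat.Prime.factorization_self Nat.prime_three, Nat.totient_prime Nat.prime_three]

/-- `H(a) = r(a) - r(a-1)` for `a ≥ 4`, else `0`. -/
def HHEE (a : ℕ) : ℝ := if a < 4 then 0 else rrEE a - rrEE (a - 1)

lemma abs_HHEE_le_one (a : ℕ) : |HHEE a| ≤ 1 := by
  rw [HHEE]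
  split
  · simp
  · rw [abs_le]
    have h1 := rrEE_le_one a; have h2 := rrEE_nonneg (a-1)
    have h3 := rrEE_nonneg a; have h4 := rrEE_le_one (a-1)
    constructor <;> nlinarith

/-- the multiplicative function with `h(p^a) = H(a)` -/
def hhEE (n : ℕ) : ℝ := if n = 0 then 0 else ∏ p ∈ n.primeFactors, HHEE (n.factorization p)

lemma hhEE_zero : hhEE 0 = 0 := rfl
lemma hhEE_one : hhEE 1 = 1 := by simp [hhEE]

lemma hhEE_mul {m n : ℕ} (h : m.Coprime n) : hhEE (m * n) = hhEE m * hhEE n := by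
  rcases eq_or_ne m 0 with rfl | hm
  · simp [hhEE]
  rcases eq_or_ne n 0 with rfl | hn
  · simp [hhEE]
  rw [hhEE, hhEE, hhEE, if_neg (by positivity), if_neg hm, if_neg hn,
    Nat.primeFactors_mul hm hn,
    Finset.prod_union (Nat.Coprime.disjoint_primeFactors h)]
  congr 1
  · apply Finset.prod_congr rfl
    intro p hp
    rw [Nat.factorization_mul hm hn]
    have : n.factorization p = 0 := by
      apply Nat.factorization_eq_zero_of_not_dvd
      intro hdvd
      have : p ∈ n.primeFactors := Nat.mem_primeFactors.2 ⟨Nat.prime_of_mem_primeFactors hp, hdvd, hn⟩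
      exact (Finset.disjoint_left.1 (Nat.Coprime.disjoint_primeFactors h) hp) this
    simp [this]
  · apply Finset.prod_congr rfl
    intro p hp
    rw [Nat.factorization_mul hm hn]
    have : m.factorization p = 0 := by
      apply Nat.factorization_eq_zero_of_not_dvd
      intro hdvd
      have : p ∈ m.primeFactors := Nat.mem_primeFactors.2 ⟨Nat.prime_of_mem_primeFactors hp, hdvd, hm⟩
      exact (Finset.disjoint_right.1 (Nat.Coprime.disjoint_primeFactors h) hp) this
    simp [this]

lemma hhEE_prime_pow {p : ℕ} (hp : p.Prime) {k : ℕ} (hk : k ≠ 0) :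
    hhEE (p ^ k) = HHEE k := by
  rw [hhEE, if_neg (pow_ne_zero _ hp.pos.ne')]
  rw [Nat.primeFactors_prime_pow hk hp, Finset.prod_singleton,
    Nat.Prime.factorization_pow hp, Finsupp.single_eq_same]

lemma abs_hhEE_le_one (n : ℕ) : |hhEE n| ≤ 1 := by
  rw [hhEE]
  split
  · simp
  · rw [Finset.abs_prod]
    apply Finset.prod_le_one
    · intro p _; positivity
    · intro p _; exact abs_HHEE_le_one _

/-- four-full support -/
lemma hhEE_eq_zero_of_small {n : ℕ} (hn : n ≠ 0) {p : ℕ} (hp : p ∈ n.primeFactors)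
    (h : n.factorization p < 4) : hhEE n = 0 := by
  rw [hhEE, if_neg hn]
  exact Finset.prod_eq_zero hp (by rw [HHEE, if_pos h])

end AuxEE

noncomputable section AuxEE2
open ArithmeticFunction
open scoped ArithmeticFunction.zeta

/-- telescoping at prime powers -/
lemma sum_HHEE (k : ℕ) (hk : 1 ≤ k) : (1 : ℝ) + ∑ i ∈ Finset.Icc 1 k, HHEE i = rrEE k := by
  induction k with
  | zero => omega
  | succ k ih =>
    rcases Nat.eq_zero_or_pos k with rfl | hk'
    · simp [HHEE, rrEE_one]
    · rw [Finset.sum_Icc_succ_top (by omega), ← add_assoc, ih hk']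
      rw [HHEE]
      split
      · -- k+1 ≤ 3, so both rr k and rr (k+1) are 1
        rename_i hlt
        rcases (by omega : k = 1 ∨ k = 2) with rfl | rfl
        · rw [rrEE_one, rrEE_two]; ring
        · rw [rrEE_two, rrEE_three]; ring
      · simp only [Nat.add_sub_cancel]
        ring

def hhA : ArithmeticFunction ℝ := ⟨hhEE, hhEE_zero⟩

lemma hhA_mult : hhA.IsMultiplicative :=
  ⟨hhEE_one, fun h => hhEE_mul h⟩

lemma zeta_mul_hhA_prime_pow {p : ℕ} (hp : p.Prime) {k : ℕ} (hk : k ≠ 0) :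
    (↑(ζ : ArithmeticFunction ℕ) * hhA) (p ^ k) = rrEE k := by
  rw [coe_zeta_mul_apply, Nat.sum_divisors_prime_pow hp]
  have : ∀ x ∈ Finset.range (k+1), hhA (p ^ x) = if x = 0 then 1 else HHEE x := by
    intro x _
    rcases eq_or_ne x 0 with rfl | hx
    · simp [hhA, hhEE_one]
    · simp only [if_neg hx]
      exact hhEE_prime_pow hp hx
  rw [Finset.sum_congr rfl this]
  have hset : Finset.range (k+1) = insert 0 (Finset.Icc 1 k) := by
    ext x; simp [Finset.mem_range, Finset.mem_Icc]; omega
  rw [hset, Finset.sum_insert (by simp), if_pos rfl]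
  rw [Finset.sum_congr rfl (fun x hx => if_neg (by simp at hx; omega))]
  exact sum_HHEE k (by omega)

/-- the key identity -/
lemma sum_divisors_hhEE {n : ℕ} (hn : n ≠ 0) :
    ∑ d ∈ n.divisors, hhEE d = (phiE n : ℝ) / (phiEStar n : ℝ) := by
  have h1 : ∑ d ∈ n.divisors, hhEE d = (↑(ζ : ArithmeticFunction ℕ) * hhA) n := by
    rw [coe_zeta_mul_apply]; rfl
  have hmult : (↑(ζ : ArithmeticFunction ℕ) * hhA).IsMultiplicative :=
    (isMultiplicative_zeta.natCast).mul hhA_mult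
  rw [h1, hmult.multiplicative_factorization _ hn, Finsupp.prod, Nat.support_factorization]
  have h2 : ∀ p ∈ n.primeFactors,
      (↑(ζ : ArithmeticFunction ℕ) * hhA) (p ^ n.factorization p) = rrEE (n.factorization p) := by
    intro p hp
    exact zeta_mul_hhA_prime_pow (Nat.prime_of_mem_primeFactors hp)
      (Nat.Prime.factorization_pos_of_dvd (Nat.prime_of_mem_primeFactors hp) hn
        (Nat.dvd_of_mem_primeFactors hp)).ne'
  rw [Finset.prod_congr rfl h2, phiE, phiEStar, Nat.cast_prod, Nat.cast_prod,
    ← Finset.prod_div_distrib]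
  rfl

end AuxEE2

section AuxEE3

def FourFullEE (n : ℕ) : Prop := n ≠ 0 ∧ ∀ p ∈ n.primeFactors, 4 ≤ n.factorization p

lemma hhEE_eq_zero_of_not_fourFull {n : ℕ} (hn : n ≠ 0) (h : ¬ FourFullEE n) : hhEE n = 0 := by
  rw [FourFullEE] at h
  push_neg at h
  obtain ⟨p, hp, hlt⟩ := h hn
  exact hhEE_eq_zero_of_small hn hp hlt

def seEE (e : ℕ) : ℕ := if e % 4 = 0 then 0 else e % 4 + 4

noncomputable def repEE (n : ℕ) : ℕ × ℕ × ℕ × ℕ :=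
  (∏ p ∈ n.primeFactors, p ^ ((n.factorization p - seEE (n.factorization p)) / 4),
   ∏ p ∈ n.primeFactors.filter (fun p => n.factorization p % 4 = 1), p,
   ∏ p ∈ n.primeFactors.filter (fun p => n.factorization p % 4 = 2), p,
   ∏ p ∈ n.primeFactors.filter (fun p => n.factorization p % 4 = 3), p)

def valEE (q : ℕ × ℕ × ℕ × ℕ) : ℕ := q.1 ^ 4 * q.2.1 ^ 5 * q.2.2.1 ^ 6 * q.2.2.2 ^ 7

lemma repEE_pos (n : ℕ) : 0 < (repEE n).1 ∧ 0 < (repEE n).2.1 ∧ 0 < (repEE n).2.2.1 ∧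
    0 < (repEE n).2.2.2 := by
  rw [repEE]
  dsimp only
  refine ⟨?_, ?_, ?_, ?_⟩ <;>
  · apply Finset.prod_pos
    intro p hp
    have : p.Prime := Nat.prime_of_mem_primeFactors (by
      first
        | exact hp
        | exact Finset.mem_of_mem_filter p hp)
    first
      | exact pow_pos this.pos _
      | exact this.pos

lemma valEE_repEE {n : ℕ} (h : FourFullEE n) : valEE (repEE n) = n := by
  obtain ⟨hn, h4⟩ := h
  rw [valEE, repEE]
  simp only
  rw [← Finset.prod_pow, ← Finset.prod_pow, ← Finset.prod_pow, ← Finset.prod_pow,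
    Finset.prod_filter, Finset.prod_filter, Finset.prod_filter,
    ← Finset.prod_mul_distrib, ← Finset.prod_mul_distrib, ← Finset.prod_mul_distrib]
  have key : ∀ p ∈ n.primeFactors,
      ((((p ^ ((n.factorization p - seEE (n.factorization p)) / 4)) ^ 4 *
        (if n.factorization p % 4 = 1 then p ^ 5 else 1)) *
        (if n.factorization p % 4 = 2 then p ^ 6 else 1)) *
        (if n.factorization p % 4 = 3 then p ^ 7 else 1)) = p ^ n.factorization p := by
    intro p hp
    have he := h4 p hp
    set e := n.factorization p with hedef
    rcases (by omega : e % 4 = 0 ∨ e % 4 = 1 ∨ e % 4 = 2 ∨ e % 4 = 3) with h0 | h0 | h0 | h0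
    · have hs : seEE e = 0 := by rw [seEE, if_pos h0]
      rw [hs, if_neg (by omega), if_neg (by omega), if_neg (by omega),
        mul_one, mul_one, mul_one, ← pow_mul]
      congr 1; omega
    · have hs : seEE e = 5 := by rw [seEE, if_neg (by omega)]; omega
      rw [hs, if_pos h0, if_neg (by omega), if_neg (by omega),
        mul_one, mul_one, ← pow_mul, ← pow_add]
      congr 1; omega
    · have hs : seEE e = 6 := by rw [seEE, if_neg (by omega)]; omega
      rw [hs, if_pos h0, if_neg (by omega), if_neg (by omega),
        mul_one, mul_one, ← pow_mul, ← pow_add]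
      congr 1; omega
    · have hs : seEE e = 7 := by rw [seEE, if_neg (by omega)]; omega
      rw [hs, if_pos h0, if_neg (by omega), if_neg (by omega),
        mul_one, mul_one, ← pow_mul, ← pow_add]
      congr 1; omega
  rw [Finset.prod_congr rfl key]
  conv_rhs => rw [← Nat.factorization_prod_pow_eq_self hn]
  rw [Finsupp.prod, Nat.support_factorization]

lemma repEE_le {n : ℕ} (h : FourFullEE n) :
    (repEE n).1 ≤ n ∧ (repEE n).2.1 ≤ n ∧ (repEE n).2.2.1 ≤ n ∧ (repEE n).2.2.2 ≤ n := by
  obtain ⟨ha, hb, hc, he⟩ := repEE_pos n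
  have hv := valEE_repEE h
  rw [valEE] at hv
  set a := (repEE n).1; set b := (repEE n).2.1; set c := (repEE n).2.2.1; set e := (repEE n).2.2.2
  have hnpos : 0 < n := Nat.pos_of_ne_zero h.1
  refine ⟨?_, ?_, ?_, ?_⟩
  · exact (Nat.le_self_pow (show (4:ℕ) ≠ 0 by norm_num) a).trans
      (Nat.le_of_dvd hnpos ⟨b ^ 5 * c ^ 6 * e ^ 7, by rw [← hv]; ring⟩)
  · exact (Nat.le_self_pow (show (5:ℕ) ≠ 0 by norm_num) b).trans
      (Nat.le_of_dvd hnpos ⟨a ^ 4 * c ^ 6 * e ^ 7, by rw [← hv]; ring⟩)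
  · exact (Nat.le_self_pow (show (6:ℕ) ≠ 0 by norm_num) c).trans
      (Nat.le_of_dvd hnpos ⟨a ^ 4 * b ^ 5 * e ^ 7, by rw [← hv]; ring⟩)
  · exact (Nat.le_self_pow (show (7:ℕ) ≠ 0 by norm_num) e).trans
      (Nat.le_of_dvd hnpos ⟨a ^ 4 * b ^ 5 * c ^ 6, by rw [← hv]; ring⟩)

end AuxEE3

noncomputable section AuxEE4
open Finset

lemma rpow_pow_aux (m : ℕ) (k : ℕ) (c : ℝ) :
    ((m:ℝ) ^ (k:ℕ)) ^ (c:ℝ) = (m:ℝ) ^ ((k:ℝ) * c) := by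
  rw [← Real.rpow_natCast (m:ℝ) k, ← Real.rpow_mul (Nat.cast_nonneg m)]

/-- telescoping: `∑_{a∈Ioc A M} (f (a-1) - f a) = f A - f M` -/
lemma sum_Ioc_tele (f : ℕ → ℝ) (A M : ℕ) (h : A ≤ M) :
    ∑ a ∈ Finset.Ioc A M, (f (a - 1) - f a) = f A - f M := by
  induction M with
  | zero =>
    have : A = 0 := by omega
    subst this; simp
  | succ M ih =>
    rcases Nat.lt_or_ge A (M + 1) with h1 | h1
    · have hAM : A ≤ M := by omega
      rw [Finset.sum_Ioc_succ_top (by omega), ih hAM]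
      simp only [Nat.add_sub_cancel]
      ring
    · have : A = M + 1 := by omega
      subst this; simp

lemma pointwise_tele {a : ℕ} (ha : 2 ≤ a) :
    (a:ℝ) ^ (-4:ℝ) ≤ ((a-1:ℕ):ℝ) ^ (-3:ℝ) - (a:ℝ) ^ (-3:ℝ) := by
  have hx : (2:ℝ) ≤ (a:ℝ) := by exact_mod_cast ha
  have hy : ((a-1:ℕ):ℝ) = (a:ℝ) - 1 := by
    push_cast [Nat.cast_sub (by omega : 1 ≤ a)]; ring
  rw [hy]
  set x := (a:ℝ)
  have hx0 : 0 < x := by linarith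
  have hx1 : 0 < x - 1 := by linarith
  rw [show (-4:ℝ) = -(4:ℕ) by norm_num, show (-3:ℝ) = -(3:ℕ) by norm_num,
    Real.rpow_neg hx0.le, Real.rpow_neg hx1.le, Real.rpow_neg hx0.le,
    Real.rpow_natCast, Real.rpow_natCast, Real.rpow_natCast]
  rw [inv_sub_inv (by positivity) (by positivity), inv_eq_one_div,
    div_le_div_iff₀ (by positivity) (by positivity)]
  nlinarith [pow_pos hx1 3, pow_pos hx0 3, pow_pos hx0 4]

/-- the telescoping tail bound -/
lemma tele_bound (A : ℕ) (hA : 1 ≤ A) (s : Finset ℕ) :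
    ∑ a ∈ s, (if A < a then (a:ℝ) ^ (-4:ℝ) else 0) ≤ (A:ℝ) ^ (-3:ℝ) := by
  classical
  set M := Finset.sup s id ⊔ A
  have hsub : s.filter (fun a => A < a) ⊆ Finset.Ioc A M := by
    intro a ha
    simp only [Finset.mem_filter] at ha
    refine Finset.mem_Ioc.2 ⟨ha.2, ?_⟩
    exact le_trans (Finset.le_sup (f := id) ha.1) le_sup_left
  calc ∑ a ∈ s, (if A < a then (a:ℝ) ^ (-4:ℝ) else 0)
      = ∑ a ∈ s.filter (fun a => A < a), (a:ℝ) ^ (-4:ℝ) := by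
        rw [Finset.sum_filter]
    _ ≤ ∑ a ∈ Finset.Ioc A M, (a:ℝ) ^ (-4:ℝ) := by
        apply Finset.sum_le_sum_of_subset_of_nonneg hsub
        intro i _ _; positivity
    _ ≤ ∑ a ∈ Finset.Ioc A M, (((a-1:ℕ):ℝ) ^ (-3:ℝ) - (a:ℝ) ^ (-3:ℝ)) := by
        apply Finset.sum_le_sum
        intro a ha
        have := (Finset.mem_Ioc.1 ha).1
        exact pointwise_tele (by omega)
    _ = (A:ℝ) ^ (-3:ℝ) - (M:ℝ) ^ (-3:ℝ) := sum_Ioc_tele (fun a => (a:ℝ) ^ (-3:ℝ)) A M le_sup_right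
    _ ≤ (A:ℝ) ^ (-3:ℝ) := by
        have : (0:ℝ) ≤ (M:ℝ) ^ (-3:ℝ) := by positivity
        linarith

end AuxEE4

noncomputable section AuxEE5
open Finset

lemma zeta4_finset_bound (s : Finset ℕ) :
    ∑ a ∈ s, (if 0 < a then (a:ℝ) ^ (-4:ℝ) else 0) ≤ 2 := by
  have h1 : ∀ a : ℕ, (if 0 < a then (a:ℝ) ^ (-4:ℝ) else 0) ≤
      (if a = 1 then 1 else 0) + (if 1 < a then (a:ℝ) ^ (-4:ℝ) else 0) := by
    intro a
    rcases (by omega : a = 0 ∨ a = 1 ∨ 1 < a) with rfl | rfl | h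
    · simp
    · norm_num
    · rw [if_pos (by omega), if_neg (by omega), if_pos h, zero_add]
  calc ∑ a ∈ s, (if 0 < a then (a:ℝ) ^ (-4:ℝ) else 0)
      ≤ ∑ a ∈ s, ((if a = 1 then 1 else 0) + (if 1 < a then (a:ℝ) ^ (-4:ℝ) else 0)) :=
        Finset.sum_le_sum (fun a _ => h1 a)
    _ = (∑ a ∈ s, (if a = 1 then (1:ℝ) else 0)) + ∑ a ∈ s, (if 1 < a then (a:ℝ) ^ (-4:ℝ) else 0) :=
        Finset.sum_add_distrib
    _ ≤ 1 + (1:ℝ) ^ (-3:ℝ) := by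
        apply add_le_add
        · rw [Finset.sum_ite_eq' s 1 (fun _ => (1:ℝ))]
          split <;> norm_num
        · have := tele_bound 1 le_rfl s
          simpa using this
    _ = 2 := by norm_num

/-- Lemma S: tail of `∑ a^{-4}` over `a^4 B > N`. -/
lemma lemS (B N : ℕ) (hB : 1 ≤ B) (hN : 1 ≤ N) (s : Finset ℕ) :
    ∑ a ∈ s, (if N < a ^ 4 * B then (a:ℝ) ^ (-4:ℝ) else 0) ≤
      8 * ((B:ℝ) / N) ^ ((3:ℝ)/4) := by
  have hBpos : (0:ℝ) < B := by exact_mod_cast hB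
  have hNpos : (0:ℝ) < N := by exact_mod_cast hN
  rcases Nat.lt_or_ge N B with hNB | hBN
  · -- B > N : crude bound by 2
    have hle : ∑ a ∈ s, (if N < a ^ 4 * B then (a:ℝ) ^ (-4:ℝ) else 0) ≤
        ∑ a ∈ s, (if 0 < a then (a:ℝ) ^ (-4:ℝ) else 0) := by
      apply Finset.sum_le_sum
      intro a _
      rcases Nat.eq_zero_or_pos a with rfl | h0
      · simp
      · rw [if_pos h0]
        split
        · exact le_rfl
        · positivity
    have h2 : (1:ℝ) ≤ ((B:ℝ)/N) ^ ((3:ℝ)/4) := by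
      apply Real.one_le_rpow _ (by norm_num)
      rw [le_div_iff₀ hNpos]
      have : (N:ℝ) ≤ (B:ℝ) := by exact_mod_cast hNB.le
      linarith
    calc ∑ a ∈ s, (if N < a ^ 4 * B then (a:ℝ) ^ (-4:ℝ) else 0)
        ≤ ∑ a ∈ s, (if 0 < a then (a:ℝ) ^ (-4:ℝ) else 0) := hle
      _ ≤ 2 := zeta4_finset_bound s
      _ ≤ 8 * ((B:ℝ)/N) ^ ((3:ℝ)/4) := by linarith
  · -- B ≤ N
    set t : ℝ := ((N:ℝ) / B) ^ ((1:ℝ)/4) with ht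
    have hBN' : (B:ℝ) ≤ (N:ℝ) := by exact_mod_cast hBN
    have htge1 : 1 ≤ t := by
      apply Real.one_le_rpow _ (by norm_num)
      rw [le_div_iff₀ hBpos]
      linarith
    set A := ⌊t⌋₊ with hA
    have hA1 : 1 ≤ A := Nat.le_floor (by exact_mod_cast htge1)
    have ht4 : t ^ (4:ℕ) = (N:ℝ) / B := by
      rw [ht, ← Real.rpow_natCast (((N:ℝ)/B) ^ ((1:ℝ)/4)) 4, ← Real.rpow_mul (by positivity)]
      norm_num
    have hptwise : ∀ a : ℕ, (if N < a ^ 4 * B then (a:ℝ) ^ (-4:ℝ) else 0) ≤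
        (if A < a then (a:ℝ) ^ (-4:ℝ) else 0) := by
      intro a
      split
      · rename_i h
        have hAa : A < a := by
          by_contra hc
          push_neg at hc
          have hat : (a:ℝ) ≤ t := le_trans (by exact_mod_cast hc) (Nat.floor_le (by linarith))
          have h4 : ((a:ℝ)) ^ (4:ℕ) ≤ t ^ (4:ℕ) := pow_le_pow_left₀ (Nat.cast_nonneg a) hat 4
          rw [ht4] at h4
          have hle2 : ((a ^ 4 * B : ℕ) : ℝ) ≤ (N:ℝ) := by
            push_cast
            calc (a:ℝ) ^ 4 * B ≤ ((N:ℝ)/B) * B :=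
                  mul_le_mul_of_nonneg_right h4 hBpos.le
            _ = N := by field_simp
          have hcontra : (N:ℝ) < ((a ^ 4 * B : ℕ) : ℝ) := by exact_mod_cast h
          linarith
        rw [if_pos hAa]
      · split
        · positivity
        · exact le_rfl
    have hA2 : t / 2 ≤ (A:ℝ) := by
      have h5 : t < (A:ℝ) + 1 := Nat.lt_floor_add_one t
      have hge : (1:ℝ) ≤ (A:ℝ) := by exact_mod_cast hA1
      linarith
    calc ∑ a ∈ s, (if N < a ^ 4 * B then (a:ℝ) ^ (-4:ℝ) else 0)
        ≤ ∑ a ∈ s, (if A < a then (a:ℝ) ^ (-4:ℝ) else 0) := Finset.sum_le_sum (fun a _ => hptwise a)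
      _ ≤ (A:ℝ) ^ (-3:ℝ) := tele_bound A hA1 s
      _ ≤ (t/2) ^ (-3:ℝ) := Real.rpow_le_rpow_of_nonpos (by linarith) hA2 (by norm_num)
      _ = 8 * ((B:ℝ) / N) ^ ((3:ℝ)/4) := by
          have h2 : ((2:ℝ)) ^ (-3:ℝ) = 1/8 := by
            rw [show (-3:ℝ) = -((3:ℕ):ℝ) by push_cast; ring, Real.rpow_neg (by norm_num),
              Real.rpow_natCast]
            norm_num
          have h3 : t ^ (-3:ℝ) = ((B:ℝ)/N) ^ ((3:ℝ)/4) := by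
            rw [ht, ← Real.rpow_mul (by positivity),
              show ((1:ℝ)/4) * (-3) = -((3:ℝ)/4) by norm_num,
              Real.rpow_neg (by positivity), ← Real.inv_rpow (by positivity), inv_div]
          rw [Real.div_rpow (by linarith : (0:ℝ) ≤ t) (by norm_num : (0:ℝ) ≤ 2), h2, h3]
          ring

end AuxEE5

noncomputable section AuxEE6
open Finset

lemma rpow_neg_nat (m : ℕ) (k : ℕ) : (m:ℝ) ^ (-(k:ℝ)) = ((m:ℝ) ^ (k:ℕ))⁻¹ := by
  rw [Real.rpow_neg (Nat.cast_nonneg m), Real.rpow_natCast]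

/-- the weight functions on quadruples -/
def GGq (q : ℕ × ℕ × ℕ × ℕ) : ℝ :=
  (q.1:ℝ) ^ (-4:ℝ) * ((q.2.1:ℝ) ^ (-5:ℝ) * ((q.2.2.1:ℝ) ^ (-6:ℝ) * (q.2.2.2:ℝ) ^ (-7:ℝ)))

def FF3 (w : ℕ × ℕ × ℕ) : ℝ :=
  (w.1:ℝ) ^ (-(5:ℝ)/4) * ((w.2.1:ℝ) ^ (-(3:ℝ)/2) * (w.2.2:ℝ) ^ (-(7:ℝ)/4))

def FFq (q : ℕ × ℕ × ℕ × ℕ) : ℝ := (q.1:ℝ) ^ (-1:ℝ) * FF3 q.2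

lemma GGq_nonneg (q : ℕ × ℕ × ℕ × ℕ) : 0 ≤ GGq q := by
  rw [GGq]; positivity

lemma FF3_nonneg (w : ℕ × ℕ × ℕ) : 0 ≤ FF3 w := by
  rw [FF3]; positivity

lemma FFq_nonneg (q : ℕ × ℕ × ℕ × ℕ) : 0 ≤ FFq q := by
  rw [FFq]; have := FF3_nonneg q.2; positivity

lemma summable_rpow_neg {c : ℝ} (hc : c < -1) : Summable (fun n : ℕ => (n:ℝ) ^ c) :=
  Real.summable_nat_rpow.2 hc

lemma summable_FF3 : Summable FF3 := by
  have h1 : Summable (fun n : ℕ => (n:ℝ) ^ (-(5:ℝ)/4)) := summable_rpow_neg (by norm_num)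
  have h2 : Summable (fun n : ℕ => (n:ℝ) ^ (-(3:ℝ)/2)) := summable_rpow_neg (by norm_num)
  have h3 : Summable (fun n : ℕ => (n:ℝ) ^ (-(7:ℝ)/4)) := summable_rpow_neg (by norm_num)
  have h23 : Summable (fun w : ℕ × ℕ => (w.1:ℝ) ^ (-(3:ℝ)/2) * (w.2:ℝ) ^ (-(7:ℝ)/4)) :=
    h2.mul_of_nonneg h3 (fun n => by positivity) (fun n => by positivity)
  exact h1.mul_of_nonneg h23 (fun n => by positivity) (fun w => by positivity)

lemma summable_GGq : Summable GGq := by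
  have h1 : Summable (fun n : ℕ => (n:ℝ) ^ (-4:ℝ)) := summable_rpow_neg (by norm_num)
  have h2 : Summable (fun n : ℕ => (n:ℝ) ^ (-5:ℝ)) := summable_rpow_neg (by norm_num)
  have h3 : Summable (fun n : ℕ => (n:ℝ) ^ (-6:ℝ)) := summable_rpow_neg (by norm_num)
  have h4 : Summable (fun n : ℕ => (n:ℝ) ^ (-7:ℝ)) := summable_rpow_neg (by norm_num)
  have h34 : Summable (fun w : ℕ × ℕ => (w.1:ℝ) ^ (-6:ℝ) * (w.2:ℝ) ^ (-7:ℝ)) :=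
    h3.mul_of_nonneg h4 (fun n => by positivity) (fun n => by positivity)
  have h234 : Summable (fun w : ℕ × ℕ × ℕ =>
      (w.1:ℝ) ^ (-5:ℝ) * ((w.2.1:ℝ) ^ (-6:ℝ) * (w.2.2:ℝ) ^ (-7:ℝ))) :=
    h2.mul_of_nonneg h34 (fun n => by positivity) (fun w => by positivity)
  exact h1.mul_of_nonneg h234 (fun n => by positivity) (fun w => by positivity)

/-- cast: inverse of `valEE` -/
lemma GGq_val {q : ℕ × ℕ × ℕ × ℕ} (h1 : 0 < q.1) (h2 : 0 < q.2.1) (h3 : 0 < q.2.2.1)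
    (h4 : 0 < q.2.2.2) : ((valEE q : ℕ):ℝ)⁻¹ = GGq q := by
  obtain ⟨a, b, c, e⟩ := q
  simp only [valEE, GGq] at *
  push_cast
  rw [show (-4:ℝ) = -((4:ℕ):ℝ) by norm_num, show (-5:ℝ) = -((5:ℕ):ℝ) by norm_num,
    show (-6:ℝ) = -((6:ℕ):ℝ) by norm_num, show (-7:ℝ) = -((7:ℕ):ℝ) by norm_num,
    rpow_neg_nat, rpow_neg_nat, rpow_neg_nat, rpow_neg_nat]
  rw [mul_inv, mul_inv, mul_inv]
  ring

/-- cast: `valEE q ^ (-1/4) = FFq q` -/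
lemma FFq_val {q : ℕ × ℕ × ℕ × ℕ} (h1 : 0 < q.1) (h2 : 0 < q.2.1) (h3 : 0 < q.2.2.1)
    (h4 : 0 < q.2.2.2) : ((valEE q : ℕ):ℝ) ^ (-(1:ℝ)/4) = FFq q := by
  obtain ⟨a, b, c, e⟩ := q
  simp only [valEE, FFq, FF3] at *
  push_cast
  rw [Real.mul_rpow (by positivity) (by positivity),
    Real.mul_rpow (by positivity) (by positivity),
    Real.mul_rpow (by positivity) (by positivity),
    rpow_pow_aux, rpow_pow_aux, rpow_pow_aux, rpow_pow_aux]
  norm_num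
  ring

end AuxEE6

noncomputable section AuxEE7
open Finset

/-- injectivity of `repEE` on four-full numbers via `valEE` -/
lemma repEE_injOn {s : Finset ℕ} (hs : ∀ d ∈ s, FourFullEE d) :
    ∀ x ∈ s, ∀ y ∈ s, repEE x = repEE y → x = y := by
  intro x hx y hy hxy
  have := valEE_repEE (hs x hx)
  rw [hxy, valEE_repEE (hs y hy)] at this
  exact this.symm

lemma abs_hh_div_nonneg (d : ℕ) : 0 ≤ |hhEE d| / d := by positivity

/-- partial sums of `|h(d)|/d` are bounded by `∑' GGq` -/
lemma hh_div_partial_bound (s : Finset ℕ) :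
    ∑ d ∈ s, |hhEE d| / d ≤ ∑' q, GGq q := by
  classical
  set S := s.filter FourFullEE with hS
  have hsplit : ∑ d ∈ s, |hhEE d| / d = ∑ d ∈ S, |hhEE d| / d := by
    rw [hS, Finset.sum_filter]
    apply Finset.sum_congr rfl
    intro d _
    split
    · rfl
    · rename_i hns
      rcases eq_or_ne d 0 with rfl | hd0
      · simp
      · rw [hhEE_eq_zero_of_not_fourFull hd0 hns]
        simp
  rw [hsplit]
  have hstep : ∑ d ∈ S, |hhEE d| / d ≤ ∑ d ∈ S, GGq (repEE d) := by
    apply Finset.sum_le_sum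
    intro d hd
    have hdF : FourFullEE d := (Finset.mem_filter.1 hd).2
    obtain ⟨h1, h2, h3, h4⟩ := repEE_pos d
    have hval := valEE_repEE hdF
    have hGG : ((d:ℕ):ℝ)⁻¹ = GGq (repEE d) := by
      have h := GGq_val h1 h2 h3 h4
      rw [hval] at h
      exact h
    rw [← hGG, div_eq_mul_inv]
    have hd1 : (1:ℝ) ≤ 1 := le_rfl
    calc |hhEE d| * ((d:ℕ):ℝ)⁻¹ ≤ 1 * ((d:ℕ):ℝ)⁻¹ := by
          apply mul_le_mul_of_nonneg_right (abs_hhEE_le_one d) (by positivity)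
      _ = ((d:ℕ):ℝ)⁻¹ := one_mul _
  refine hstep.trans ?_
  have himg : ∑ d ∈ S, GGq (repEE d) = ∑ q ∈ S.image repEE, GGq q :=
    (Finset.sum_image (repEE_injOn (fun d hd => (Finset.mem_filter.1 hd).2))).symm
  rw [himg]
  exact Summable.sum_le_tsum _ (fun q _ => GGq_nonneg q) summable_GGq

lemma summable_abs_hh_div : Summable (fun d : ℕ => |hhEE d| / d) :=
  summable_of_sum_le abs_hh_div_nonneg hh_div_partial_bound

lemma summable_hh_div : Summable (fun d : ℕ => hhEE d / d) := by
  apply Summable.of_abs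
  have : ∀ d : ℕ, |hhEE d / d| = |hhEE d| / d := by
    intro d
    rw [abs_div, Nat.abs_cast]
  simpa only [this] using summable_abs_hh_div

/-- sum over `Icc 1 N` of `(a:ℝ)⁻¹` is at most `1 + log N` -/
lemma harmonic_Icc_bound (N : ℕ) :
    ∑ a ∈ Finset.Icc 1 N, (a:ℝ) ^ (-1:ℝ) ≤ 1 + Real.log N := by
  have h1 : ∑ a ∈ Finset.Icc 1 N, (a:ℝ) ^ (-1:ℝ) = ((harmonic N : ℚ) : ℝ) := by
    rw [harmonic]
    push_cast
    rw [show Finset.Icc 1 N = Finset.Ico 1 (N+1) by rw [Finset.Ico_add_one_right_eq_Icc],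
      Finset.sum_Ico_eq_sum_range]
    simp only [Nat.add_sub_cancel]
    apply Finset.sum_congr rfl
    intro i _
    rw [Real.rpow_neg_one]
    push_cast
    ring
  rw [h1]
  exact harmonic_le_one_add_log N

end AuxEE7

noncomputable section AuxEE8
open Finset

/-- `∑' FF3` -/
def CF3 : ℝ := ∑' w : ℕ × ℕ × ℕ, FF3 w

lemma CF3_nonneg : 0 ≤ CF3 := tsum_nonneg FF3_nonneg

lemma head_bound (N : ℕ) (hN : 1 ≤ N) :
    ∑ d ∈ Finset.Icc 1 N, |hhEE d| ≤ (N:ℝ) ^ ((1:ℝ)/4) * ((1 + Real.log N) * CF3) := by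
  classical
  set S := (Finset.Icc 1 N).filter FourFullEE with hS
  have hsplit : ∑ d ∈ Finset.Icc 1 N, |hhEE d| = ∑ d ∈ S, |hhEE d| := by
    rw [hS, Finset.sum_filter]
    apply Finset.sum_congr rfl
    intro d hd
    have hd1 : 1 ≤ d := (Finset.mem_Icc.1 hd).1
    split
    · rfl
    · rename_i hns
      rw [hhEE_eq_zero_of_not_fourFull (by omega) hns, abs_zero]
  rw [hsplit]
  have hstep : ∑ d ∈ S, |hhEE d| ≤ ∑ d ∈ S, (N:ℝ) ^ ((1:ℝ)/4) * FFq (repEE d) := by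
    apply Finset.sum_le_sum
    intro d hd
    have hdm := Finset.mem_filter.1 hd
    have hd1 : 1 ≤ d := (Finset.mem_Icc.1 hdm.1).1
    have hdN : d ≤ N := (Finset.mem_Icc.1 hdm.1).2
    have hdF : FourFullEE d := hdm.2
    obtain ⟨h1, h2, h3, h4⟩ := repEE_pos d
    have hval := valEE_repEE hdF
    have hFF : ((d:ℕ):ℝ) ^ (-(1:ℝ)/4) = FFq (repEE d) := by
      have h := FFq_val h1 h2 h3 h4
      rw [hval] at h
      exact h
    have hdpos : (0:ℝ) < d := by exact_mod_cast hd1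
    have hone : (1:ℝ) = (d:ℝ) ^ ((1:ℝ)/4) * (d:ℝ) ^ (-(1:ℝ)/4) := by
      rw [← Real.rpow_add hdpos]
      norm_num
    have hmono : (d:ℝ) ^ ((1:ℝ)/4) ≤ (N:ℝ) ^ ((1:ℝ)/4) :=
      Real.rpow_le_rpow (by positivity) (by exact_mod_cast hdN) (by norm_num)
    calc |hhEE d| ≤ 1 := abs_hhEE_le_one d
      _ = (d:ℝ) ^ ((1:ℝ)/4) * (d:ℝ) ^ (-(1:ℝ)/4) := hone
      _ ≤ (N:ℝ) ^ ((1:ℝ)/4) * (d:ℝ) ^ (-(1:ℝ)/4) :=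
          mul_le_mul_of_nonneg_right hmono (by positivity)
      _ = (N:ℝ) ^ ((1:ℝ)/4) * FFq (repEE d) := by rw [hFF]
  refine hstep.trans ?_
  rw [← Finset.mul_sum]
  apply mul_le_mul_of_nonneg_left _ (by positivity)
  -- ∑ d ∈ S, FFq (repEE d) ≤ (1 + log N) * CF3
  have himg : ∑ d ∈ S, FFq (repEE d) = ∑ q ∈ S.image repEE, FFq q :=
    (Finset.sum_image (repEE_injOn (fun d hd => (Finset.mem_filter.1 hd).2))).symm
  rw [himg]
  set T3 := (Finset.Icc 1 N) ×ˢ ((Finset.Icc 1 N) ×ˢ (Finset.Icc 1 N)) with hT3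
  have hsub : S.image repEE ⊆ (Finset.Icc 1 N) ×ˢ T3 := by
    intro q hq
    obtain ⟨d, hd, rfl⟩ := Finset.mem_image.1 hq
    have hdm := Finset.mem_filter.1 hd
    have hdN : d ≤ N := (Finset.mem_Icc.1 hdm.1).2
    obtain ⟨h1, h2, h3, h4⟩ := repEE_pos d
    obtain ⟨l1, l2, l3, l4⟩ := repEE_le hdm.2
    rw [Finset.mem_product, Finset.mem_product, Finset.mem_product]
    exact ⟨Finset.mem_Icc.2 ⟨h1, l1.trans hdN⟩,
      Finset.mem_Icc.2 ⟨h2, l2.trans hdN⟩,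
      Finset.mem_Icc.2 ⟨h3, l3.trans hdN⟩,
      Finset.mem_Icc.2 ⟨h4, l4.trans hdN⟩⟩
  calc ∑ q ∈ S.image repEE, FFq q
      ≤ ∑ q ∈ (Finset.Icc 1 N) ×ˢ T3, FFq q :=
        Finset.sum_le_sum_of_subset_of_nonneg hsub (fun q _ _ => FFq_nonneg q)
    _ = (∑ a ∈ Finset.Icc 1 N, (a:ℝ) ^ (-1:ℝ)) * ∑ w ∈ T3, FF3 w := by
        rw [Finset.sum_product, Finset.sum_mul]
        apply Finset.sum_congr rfl
        intro a _
        rw [Finset.mul_sum]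
        rfl
    _ ≤ (1 + Real.log N) * CF3 := by
        apply mul_le_mul (harmonic_Icc_bound N)
          (Summable.sum_le_tsum _ (fun w _ => FF3_nonneg w) summable_FF3)
          (Finset.sum_nonneg (fun w _ => FF3_nonneg w))
        have : (0:ℝ) ≤ Real.log N := Real.log_nonneg (by exact_mod_cast hN)
        linarith

end AuxEE8

noncomputable section AuxEE9
open Finset

lemma rpow_combine {m : ℕ} (hm : 0 < m) (x y : ℝ) :
    (m:ℝ) ^ x * (m:ℝ) ^ y = (m:ℝ) ^ (x + y) :=
  (Real.rpow_add (by exact_mod_cast hm) x y).symm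

/-- key algebraic identity for the tail -/
lemma keyH (w : ℕ × ℕ × ℕ) (hb : 0 < w.1) (hc : 0 < w.2.1) (he : 0 < w.2.2)
    (N : ℕ) (hN : 1 ≤ N) :
    8 * (((w.1 ^ 5 * w.2.1 ^ 6 * w.2.2 ^ 7 : ℕ):ℝ) / N) ^ ((3:ℝ)/4) *
      ((w.1:ℝ) ^ (-5:ℝ) * ((w.2.1:ℝ) ^ (-6:ℝ) * (w.2.2:ℝ) ^ (-7:ℝ))) =
    8 * (N:ℝ) ^ (-(3:ℝ)/4) * FF3 w := by
  obtain ⟨b, c, e⟩ := w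
  simp only [FF3] at *
  have hNpos : (0:ℝ) < N := by exact_mod_cast hN
  rw [Real.div_rpow (by positivity) hNpos.le]
  push_cast
  rw [Real.mul_rpow (by positivity) (by positivity),
    Real.mul_rpow (by positivity) (by positivity),
    rpow_pow_aux, rpow_pow_aux, rpow_pow_aux]
  rw [div_eq_mul_inv, ← Real.rpow_neg hNpos.le]
  have hb' : (b:ℝ) ^ ((5:ℝ) * (3/4)) * (b:ℝ) ^ (-5:ℝ) = (b:ℝ) ^ (-(5:ℝ)/4) := by
    rw [rpow_combine hb]; norm_num
  have hc' : (c:ℝ) ^ ((6:ℝ) * (3/4)) * (c:ℝ) ^ (-6:ℝ) = (c:ℝ) ^ (-(3:ℝ)/2) := by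
    rw [rpow_combine hc]; norm_num
  have he' : (e:ℝ) ^ ((7:ℝ) * (3/4)) * (e:ℝ) ^ (-7:ℝ) = (e:ℝ) ^ (-(7:ℝ)/4) := by
    rw [rpow_combine he]; norm_num
  calc 8 * ((b:ℝ) ^ ((5:ℝ)*(3/4)) * (c:ℝ) ^ ((6:ℝ)*(3/4)) * (e:ℝ) ^ ((7:ℝ)*(3/4)) *
        (N:ℝ) ^ (-((3:ℝ)/4))) * ((b:ℝ) ^ (-5:ℝ) * ((c:ℝ) ^ (-6:ℝ) * (e:ℝ) ^ (-7:ℝ)))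
      = 8 * (N:ℝ) ^ (-((3:ℝ)/4)) * (((b:ℝ) ^ ((5:ℝ)*(3/4)) * (b:ℝ) ^ (-5:ℝ)) *
          (((c:ℝ) ^ ((6:ℝ)*(3/4)) * (c:ℝ) ^ (-6:ℝ)) *
           ((e:ℝ) ^ ((7:ℝ)*(3/4)) * (e:ℝ) ^ (-7:ℝ)))) := by ring
    _ = 8 * (N:ℝ) ^ (-(3:ℝ)/4) * ((b:ℝ) ^ (-(5:ℝ)/4) * ((c:ℝ) ^ (-(3:ℝ)/2) * (e:ℝ) ^ (-(7:ℝ)/4))) := by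
        rw [hb', hc', he']
        norm_num

lemma tail_finset_bound (N : ℕ) (hN : 1 ≤ N) (s : Finset ℕ) :
    ∑ d ∈ s, (if N < d then |hhEE d| / d else 0) ≤ 8 * (N:ℝ) ^ (-(3:ℝ)/4) * CF3 := by
  classical
  set u : ℕ → ℝ := fun d => if N < d ∧ FourFullEE d then ((d:ℝ))⁻¹ else 0 with hu
  have hptw : ∀ d : ℕ, (if N < d then |hhEE d| / d else 0) ≤ u d := by
    intro d
    rw [hu]
    simp only
    split
    · rename_i hNd
      by_cases hF : FourFullEE d
      · rw [if_pos ⟨hNd, hF⟩]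
        rw [div_eq_mul_inv]
        calc |hhEE d| * ((d:ℝ))⁻¹ ≤ 1 * ((d:ℝ))⁻¹ :=
              mul_le_mul_of_nonneg_right (abs_hhEE_le_one d) (by positivity)
          _ = ((d:ℝ))⁻¹ := one_mul _
      · rw [if_neg (by tauto), hhEE_eq_zero_of_not_fourFull (by omega) hF]
        simp
    · rw [if_neg (by tauto)]
  refine (Finset.sum_le_sum (fun d _ => hptw d)).trans ?_
  -- now bound ∑ u
  set S' := s.filter (fun d => N < d ∧ FourFullEE d) with hS'
  have h1 : ∑ d ∈ s, u d = ∑ d ∈ S', ((d:ℝ))⁻¹ := by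
    rw [hS', Finset.sum_filter]
  rw [h1]
  set Gc : ℕ × ℕ × ℕ × ℕ → ℝ := fun q => if N < valEE q then GGq q else 0 with hGc
  have hGc_nonneg : ∀ q, 0 ≤ Gc q := by
    intro q; rw [hGc]; simp only; split
    · exact GGq_nonneg q
    · exact le_rfl
  have h2 : ∑ d ∈ S', ((d:ℝ))⁻¹ = ∑ d ∈ S', Gc (repEE d) := by
    apply Finset.sum_congr rfl
    intro d hd
    have hdm := Finset.mem_filter.1 hd
    obtain ⟨h1', h2', h3', h4'⟩ := repEE_pos d
    have hval := valEE_repEE hdm.2.2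
    have hG := GGq_val h1' h2' h3' h4'
    rw [hval] at hG
    rw [hGc]
    simp only
    rw [hval, if_pos hdm.2.1, hG]
  rw [h2]
  have h3 : ∑ d ∈ S', Gc (repEE d) = ∑ q ∈ S'.image repEE, Gc q :=
    (Finset.sum_image (repEE_injOn (fun d hd => (Finset.mem_filter.1 hd).2.2))).symm
  rw [h3]
  set P := S'.image repEE with hP
  set A := P.image Prod.fst with hA
  set W := P.image Prod.snd with hW
  have hsub : P ⊆ A ×ˢ W := by
    intro q hq
    rw [Finset.mem_product]
    exact ⟨Finset.mem_image_of_mem _ hq, Finset.mem_image_of_mem _ hq⟩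
  have hWpos : ∀ w ∈ W, 0 < w.1 ∧ 0 < w.2.1 ∧ 0 < w.2.2 := by
    intro w hw
    obtain ⟨q, hq, rfl⟩ := Finset.mem_image.1 hw
    obtain ⟨d, _, rfl⟩ := Finset.mem_image.1 hq
    obtain ⟨_, p2, p3, p4⟩ := repEE_pos d
    exact ⟨p2, p3, p4⟩
  calc ∑ q ∈ P, Gc q
      ≤ ∑ q ∈ A ×ˢ W, Gc q :=
        Finset.sum_le_sum_of_subset_of_nonneg hsub (fun q _ _ => hGc_nonneg q)
    _ = ∑ w ∈ W, ∑ a ∈ A, Gc (a, w) := by rw [Finset.sum_product_right]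
    _ ≤ ∑ w ∈ W, 8 * (N:ℝ) ^ (-(3:ℝ)/4) * FF3 w := by
        apply Finset.sum_le_sum
        intro w hw
        obtain ⟨hb, hc, he⟩ := hWpos w hw
        set Bw : ℕ := w.1 ^ 5 * w.2.1 ^ 6 * w.2.2 ^ 7 with hBw
        have hBw1 : 1 ≤ Bw := by
          have : 0 < Bw := by rw [hBw]; positivity
          omega
        set GG3w : ℝ := (w.1:ℝ) ^ (-5:ℝ) * ((w.2.1:ℝ) ^ (-6:ℝ) * (w.2.2:ℝ) ^ (-7:ℝ)) with hGG3w
        have hGG3w_nonneg : 0 ≤ GG3w := by rw [hGG3w]; positivity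
        have hval_aw : ∀ a : ℕ, valEE (a, w) = a ^ 4 * Bw := by
          intro a
          rw [valEE, hBw]
          ring
        have hGq_aw : ∀ a : ℕ, GGq (a, w) = (a:ℝ) ^ (-4:ℝ) * GG3w := by
          intro a; rfl
        have hinner : ∑ a ∈ A, Gc (a, w) =
            (∑ a ∈ A, (if N < a ^ 4 * Bw then (a:ℝ) ^ (-4:ℝ) else 0)) * GG3w := by
          rw [Finset.sum_mul]
          apply Finset.sum_congr rfl
          intro a _
          rw [hGc]
          simp only
          rw [hval_aw a, hGq_aw a, ite_mul, zero_mul]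
        rw [hinner]
        calc (∑ a ∈ A, (if N < a ^ 4 * Bw then (a:ℝ) ^ (-4:ℝ) else 0)) * GG3w
            ≤ (8 * ((Bw:ℝ) / N) ^ ((3:ℝ)/4)) * GG3w :=
              mul_le_mul_of_nonneg_right (lemS Bw N hBw1 hN A) hGG3w_nonneg
          _ = 8 * (N:ℝ) ^ (-(3:ℝ)/4) * FF3 w := by
              rw [hBw, hGG3w]
              exact keyH w hb hc he N hN
    _ = 8 * (N:ℝ) ^ (-(3:ℝ)/4) * ∑ w ∈ W, FF3 w := by rw [Finset.mul_sum]
    _ ≤ 8 * (N:ℝ) ^ (-(3:ℝ)/4) * CF3 := by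
        apply mul_le_mul_of_nonneg_left
          (Summable.sum_le_tsum _ (fun w _ => FF3_nonneg w) summable_FF3)
          (by positivity)

lemma tail_tsum_bound (N : ℕ) (hN : 1 ≤ N) :
    ∑' d : ℕ, (if N < d then |hhEE d| / d else 0) ≤ 8 * (N:ℝ) ^ (-(3:ℝ)/4) * CF3 := by
  have hsummable : Summable (fun d : ℕ => if N < d then |hhEE d| / d else 0) := by
    apply Summable.of_nonneg_of_le _ _ summable_abs_hh_div
    · intro d; split
      · positivity
      · exact le_rfl
    · intro d; split
      · exact le_rfl
      · positivity
  exact Summable.tsum_le_of_sum_le hsummable (tail_finset_bound N hN)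

end AuxEE9

noncomputable section AuxEE10
open Finset

def ggEE (d : ℕ) : ℝ := hhEE d / d

lemma ggEE_zero : ggEE 0 = 0 := by simp [ggEE]
lemma ggEE_one : ggEE 1 = 1 := by simp [ggEE, hhEE_one]

lemma ggEE_mul {m n : ℕ} (h : m.Coprime n) : ggEE (m * n) = ggEE m * ggEE n := by
  rcases eq_or_ne m 0 with rfl | hm
  · simp [ggEE, hhEE_zero]
  rcases eq_or_ne n 0 with rfl | hn
  · simp [ggEE, hhEE_zero]
  rw [ggEE, ggEE, ggEE, hhEE_mul h, Nat.cast_mul, div_mul_div_comm]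

lemma summable_norm_ggEE : Summable (fun d : ℕ => ‖ggEE d‖) := by
  have : ∀ d : ℕ, ‖ggEE d‖ = |hhEE d| / d := by
    intro d
    rw [ggEE, Real.norm_eq_abs, abs_div, Nat.abs_cast]
  simpa only [this] using summable_abs_hh_div

def CEE : ℝ := ∑' n : ℕ, ggEE n

lemma euler_tprod : ∏' p : Nat.Primes, ∑' e : ℕ, ggEE ((p:ℕ) ^ e) = CEE :=
  EulerProduct.eulerProduct_tprod ggEE_one (fun h => ggEE_mul h) summable_norm_ggEE ggEE_zero

lemma summable_gg_pow (p : Nat.Primes) : Summable (fun e : ℕ => ggEE ((p:ℕ) ^ e)) := by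
  have hinj : Function.Injective (fun e : ℕ => (p:ℕ) ^ e) :=
    Nat.pow_right_injective p.2.two_le
  have hg : Summable ggEE := summable_norm_ggEE.of_norm
  exact hg.comp_injective hinj

/-- factor identification -/
lemma euler_factor (p : Nat.Primes) :
    ∑' e : ℕ, ggEE ((p:ℕ) ^ e) =
      1 + ∑' a : ℕ,
        ((Nat.totient (a + 4) : ℝ) / (phiStar (a + 4) : ℝ) -
            (Nat.totient (a + 3) : ℝ) / (phiStar (a + 3) : ℝ)) /
          ((p:ℕ) : ℝ) ^ (a + 4) := by
  have hp : (p:ℕ).Prime := p.2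
  have hs0 := summable_gg_pow p
  have hs1 : Summable (fun e : ℕ => ggEE ((p:ℕ) ^ (e + 1))) := by
    exact (summable_nat_add_iff 1).2 hs0
  have hs2 : Summable (fun e : ℕ => ggEE ((p:ℕ) ^ (e + 2))) := by
    exact (summable_nat_add_iff 2).2 hs0
  have hs3 : Summable (fun e : ℕ => ggEE ((p:ℕ) ^ (e + 3))) := by
    exact (summable_nat_add_iff 3).2 hs0
  rw [Summable.tsum_eq_zero_add hs0, Summable.tsum_eq_zero_add hs1, Summable.tsum_eq_zero_add hs2, Summable.tsum_eq_zero_add hs3]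
  have h0 : ggEE ((p:ℕ) ^ 0) = 1 := by rw [pow_zero, ggEE_one]
  have hsm : ∀ k, 1 ≤ k → k < 4 → ggEE ((p:ℕ) ^ k) = 0 := by
    intro k hk1 hk4
    rw [ggEE, hhEE_prime_pow hp (by omega), HHEE, if_pos hk4, zero_div]
  have hterm : ∀ a : ℕ, ggEE ((p:ℕ) ^ (a + 4)) =
      ((Nat.totient (a + 4) : ℝ) / (phiStar (a + 4) : ℝ) -
          (Nat.totient (a + 3) : ℝ) / (phiStar (a + 3) : ℝ)) / ((p:ℕ) : ℝ) ^ (a + 4) := by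
    intro a
    rw [ggEE, hhEE_prime_pow hp (by omega), HHEE, if_neg (by omega),
      show a + 4 - 1 = a + 3 from rfl]
    simp only [rrEE]
    push_cast
    ring
  have e1 : ggEE ((p:ℕ) ^ (0+1)) = 0 := hsm 1 le_rfl (by norm_num)
  have e2 : ggEE ((p:ℕ) ^ (0+1+1)) = 0 := hsm 2 (by norm_num) (by norm_num)
  have e3 : ggEE ((p:ℕ) ^ (0+1+1+1)) = 0 := hsm 3 (by norm_num) (by norm_num)
  have htl : ∑' a : ℕ, ggEE ((p:ℕ) ^ (a+1+1+1+1)) = ∑' a : ℕ,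
      ((Nat.totient (a + 4) : ℝ) / (phiStar (a + 4) : ℝ) -
          (Nat.totient (a + 3) : ℝ) / (phiStar (a + 3) : ℝ)) / ((p:ℕ) : ℝ) ^ (a + 4) := by
    apply tsum_congr
    intro a
    rw [show a+1+1+1+1 = a+4 from by omega]
    exact hterm a
  rw [h0, e1, e2, e3, htl]
  ring

end AuxEE10

noncomputable section AuxEE11
open Finset

lemma swap_sum (N : ℕ) :
    ∑ n ∈ Finset.Icc 1 N, (∑ d ∈ n.divisors, hhEE d) =
      ∑ d ∈ Finset.Icc 1 N, hhEE d * ((N / d : ℕ) : ℝ) := by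
  classical
  have hIcc : Finset.Icc 1 N = Finset.Ioc 0 N := rfl
  rw [hIcc]
  have hdiv : ∀ n ∈ Finset.Ioc 0 N, n.divisors = (Finset.Ioc 0 N).filter (· ∣ n) := by
    intro n hn
    have hn' := Finset.mem_Ioc.1 hn
    ext d
    simp only [Nat.mem_divisors, Finset.mem_filter, Finset.mem_Ioc]
    constructor
    · rintro ⟨hd, -⟩
      exact ⟨⟨Nat.pos_of_dvd_of_pos hd hn'.1, (Nat.le_of_dvd hn'.1 hd).trans hn'.2⟩, hd⟩
    · rintro ⟨-, hd⟩
      exact ⟨hd, by omega⟩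
  calc ∑ n ∈ Finset.Ioc 0 N, (∑ d ∈ n.divisors, hhEE d)
      = ∑ n ∈ Finset.Ioc 0 N, ∑ d ∈ Finset.Ioc 0 N, (if d ∣ n then hhEE d else 0) := by
        apply Finset.sum_congr rfl
        intro n hn
        rw [hdiv n hn, Finset.sum_filter]
    _ = ∑ d ∈ Finset.Ioc 0 N, ∑ n ∈ Finset.Ioc 0 N, (if d ∣ n then hhEE d else 0) :=
        Finset.sum_comm
    _ = ∑ d ∈ Finset.Ioc 0 N, hhEE d * ((N / d : ℕ) : ℝ) := by
        apply Finset.sum_congr rfl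
        intro d _
        rw [← Finset.sum_filter, Finset.sum_const, Nat.Ioc_filter_dvd_card_eq_div N d,
          nsmul_eq_mul, mul_comm]

lemma tsum_split (N : ℕ) :
    CEE = (∑ d ∈ Finset.Icc 1 N, ggEE d) + ∑' d : ℕ, (if N < d then ggEE d else 0) := by
  classical
  have hgh : Summable (fun d : ℕ => if N < d then 0 else ggEE d) := by
    apply summable_norm_ggEE.of_norm.summable_of_eq_zero_or_self
    intro d
    split
    · exact Or.inl rfl
    · exact Or.inr rfl
  have hgt : Summable (fun d : ℕ => if N < d then ggEE d else 0) := by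
    apply summable_norm_ggEE.of_norm.summable_of_eq_zero_or_self
    intro d
    split
    · exact Or.inr rfl
    · exact Or.inl rfl
  have hsplit : ∀ d : ℕ, ggEE d = (if N < d then 0 else ggEE d) + (if N < d then ggEE d else 0) := by
    intro d
    split <;> ring
  have h1 : CEE = (∑' d : ℕ, (if N < d then 0 else ggEE d)) +
      ∑' d : ℕ, (if N < d then ggEE d else 0) := by
    rw [CEE]
    rw [tsum_congr hsplit]
    exact Summable.tsum_add hgh hgt
  rw [h1]
  congr 1
  rw [tsum_eq_sum (s := Finset.range (N+1)) (by
    intro d hd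
    rw [Finset.mem_range] at hd
    rw [if_pos (by omega)])]
  have hset : Finset.range (N+1) = insert 0 (Finset.Icc 1 N) := by
    ext x; simp [Finset.mem_range, Finset.mem_Icc]; omega
  rw [hset, Finset.sum_insert (by simp), if_neg (by omega), ggEE_zero, zero_add]
  apply Finset.sum_congr rfl
  intro d hd
  rw [if_neg (by have := (Finset.mem_Icc.1 hd).2; omega)]

end AuxEE11

noncomputable section AuxEE12
open Finset

lemma main_est (x : ℝ) (hx : 2 ≤ x) :
    |(∑ n ∈ Finset.Icc 1 ⌊x⌋₊, (phiE n : ℝ) / (phiEStar n : ℝ)) - x * CEE| ≤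
      x ^ ((1:ℝ)/4) * ((1 + Real.log x) * CF3) + 16 * CF3 * x ^ ((1:ℝ)/4) := by
  classical
  set N := ⌊x⌋₊ with hNdef
  have hx0 : (0:ℝ) < x := by linarith
  have hN1 : 1 ≤ N := Nat.le_floor (by exact_mod_cast (by linarith : (1:ℝ) ≤ x))
  have hNx : (N:ℝ) ≤ x := Nat.floor_le hx0.le
  have hxN1 : x < (N:ℝ) + 1 := Nat.lt_floor_add_one x
  have hN2 : x / 2 ≤ (N:ℝ) := by linarith
  have hNpos : (0:ℝ) < (N:ℝ) := by linarith
  -- step 1: rewrite the sum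
  have h1 : ∑ n ∈ Finset.Icc 1 N, (phiE n : ℝ) / (phiEStar n : ℝ) =
      ∑ d ∈ Finset.Icc 1 N, hhEE d * ((N / d : ℕ) : ℝ) := by
    rw [← swap_sum N]
    apply Finset.sum_congr rfl
    intro n hn
    have := (Finset.mem_Icc.1 hn).1
    exact (sum_divisors_hhEE (by omega)).symm
  -- step 2: split the tsum
  set T : ℝ := ∑' d : ℕ, (if N < d then ggEE d else 0) with hT
  have h2 : x * CEE = (∑ d ∈ Finset.Icc 1 N, x * ggEE d) + x * T := by
    rw [tsum_split N, mul_add, Finset.mul_sum]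
  -- step 3: the difference
  have h3 : (∑ n ∈ Finset.Icc 1 N, (phiE n : ℝ) / (phiEStar n : ℝ)) - x * CEE =
      (∑ d ∈ Finset.Icc 1 N, hhEE d * (((N / d : ℕ) : ℝ) - x / d)) - x * T := by
    rw [h1, h2, show (∑ d ∈ Finset.Icc 1 N, hhEE d * (((N / d : ℕ) : ℝ) - x / d)) =
        (∑ d ∈ Finset.Icc 1 N, hhEE d * ((N / d : ℕ) : ℝ)) - ∑ d ∈ Finset.Icc 1 N, x * ggEE d
      from by
        rw [← Finset.sum_sub_distrib]
        exact Finset.sum_congr rfl (fun d _ => by rw [ggEE]; ring)]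
    ring
  rw [h3]
  -- step 4: bound the floor error term
  have h4 : |∑ d ∈ Finset.Icc 1 N, hhEE d * (((N / d : ℕ) : ℝ) - x / d)| ≤
      ∑ d ∈ Finset.Icc 1 N, |hhEE d| := by
    refine (Finset.abs_sum_le_sum_abs _ _).trans ?_
    apply Finset.sum_le_sum
    intro d hd
    have hd1 : 1 ≤ d := (Finset.mem_Icc.1 hd).1
    rw [abs_mul]
    have hfl : ((N / d : ℕ) : ℝ) = (⌊x / d⌋₊ : ℝ) := by
      rw [hNdef, ← Nat.floor_div_natCast x d]
    have hxd0 : 0 ≤ x / d := by positivity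
    have hb1 : (⌊x / d⌋₊ : ℝ) ≤ x / d := Nat.floor_le hxd0
    have hb2 : x / d < (⌊x / d⌋₊ : ℝ) + 1 := Nat.lt_floor_add_one _
    have habs : |((N / d : ℕ) : ℝ) - x / d| ≤ 1 := by
      rw [hfl, abs_le]
      constructor <;> linarith
    calc |hhEE d| * |((N / d : ℕ) : ℝ) - x / d| ≤ |hhEE d| * 1 :=
          mul_le_mul_of_nonneg_left habs (abs_nonneg _)
      _ = |hhEE d| := mul_one _
  -- step 5: bound |T|
  have h5 : |T| ≤ 8 * (N:ℝ) ^ (-(3:ℝ)/4) * CF3 := by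
    have hsum : Summable (fun d : ℕ => ‖if N < d then ggEE d else 0‖) := by
      apply summable_abs_hh_div.of_nonneg_of_le (fun d => norm_nonneg _)
      intro d
      rw [Real.norm_eq_abs]
      split
      · rw [ggEE, abs_div, Nat.abs_cast]
      · rw [abs_zero]
        positivity
    have := norm_tsum_le_tsum_norm hsum
    rw [hT, ← Real.norm_eq_abs]
    refine this.trans ?_
    have heq : ∀ d : ℕ, ‖if N < d then ggEE d else 0‖ = (if N < d then |hhEE d| / d else 0) := by
      intro d
      split
      · rw [Real.norm_eq_abs, ggEE, abs_div, Nat.abs_cast]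
      · rw [norm_zero]
    rw [tsum_congr heq]
    exact tail_tsum_bound N hN1
  -- step 6: combine
  have h6 : ∑ d ∈ Finset.Icc 1 N, |hhEE d| ≤ x ^ ((1:ℝ)/4) * ((1 + Real.log x) * CF3) := by
    refine (head_bound N hN1).trans ?_
    have m1 : (N:ℝ) ^ ((1:ℝ)/4) ≤ x ^ ((1:ℝ)/4) :=
      Real.rpow_le_rpow hNpos.le hNx (by norm_num)
    have m2 : (1:ℝ) + Real.log N ≤ 1 + Real.log x := by
      have := Real.log_le_log hNpos hNx
      linarith
    have m3 : (0:ℝ) ≤ 1 + Real.log N := by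
      have : (0:ℝ) ≤ Real.log N := Real.log_nonneg (by exact_mod_cast hN1)
      linarith
    apply mul_le_mul m1 (mul_le_mul_of_nonneg_right m2 CF3_nonneg)
      (mul_nonneg m3 CF3_nonneg) (by positivity)
  have h7 : x * |T| ≤ 16 * CF3 * x ^ ((1:ℝ)/4) := by
    have k1 : (N:ℝ) ^ (-(3:ℝ)/4) ≤ (x/2) ^ (-(3:ℝ)/4) :=
      Real.rpow_le_rpow_of_nonpos (by linarith) hN2 (by norm_num)
    have k2 : (x/2) ^ (-(3:ℝ)/4) ≤ x ^ (-(3:ℝ)/4) * 2 := by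
      rw [Real.div_rpow hx0.le (by norm_num)]
      rw [div_eq_mul_inv]
      apply mul_le_mul_of_nonneg_left _ (by positivity)
      rw [← Real.rpow_neg (by norm_num)]
      have : ((2:ℝ)) ^ (-(-(3:ℝ)/4)) ≤ (2:ℝ) ^ (1:ℝ) :=
        Real.rpow_le_rpow_of_exponent_le (by norm_num) (by norm_num)
      rw [Real.rpow_one] at this
      exact this
    have k3 : x * x ^ (-(3:ℝ)/4) = x ^ ((1:ℝ)/4) := by
      nth_rewrite 1 [← Real.rpow_one x]
      rw [← Real.rpow_add hx0]
      norm_num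
    calc x * |T| ≤ x * (8 * (N:ℝ) ^ (-(3:ℝ)/4) * CF3) :=
          mul_le_mul_of_nonneg_left h5 hx0.le
      _ ≤ x * (8 * (x ^ (-(3:ℝ)/4) * 2) * CF3) := by
          apply mul_le_mul_of_nonneg_left _ hx0.le
          apply mul_le_mul_of_nonneg_right _ CF3_nonneg
          apply mul_le_mul_of_nonneg_left (k1.trans k2) (by norm_num)
      _ = 16 * CF3 * (x * x ^ (-(3:ℝ)/4)) := by ring
      _ = 16 * CF3 * x ^ ((1:ℝ)/4) := by rw [k3]
  calc |(∑ d ∈ Finset.Icc 1 N, hhEE d * (((N / d : ℕ) : ℝ) - x / d)) - x * T|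
      ≤ |∑ d ∈ Finset.Icc 1 N, hhEE d * (((N / d : ℕ) : ℝ) - x / d)| + |x * T| :=
        abs_sub _ _
    _ ≤ (∑ d ∈ Finset.Icc 1 N, |hhEE d|) + x * |T| := by
        rw [abs_mul, abs_of_nonneg hx0.le]
        exact add_le_add h4 le_rfl
    _ ≤ x ^ ((1:ℝ)/4) * ((1 + Real.log x) * CF3) + 16 * CF3 * x ^ ((1:ℝ)/4) :=
        add_le_add h6 h7

end AuxEE12

/-- `Σ_{n ≤ x} φ^{(e)}(n)/φ^{(e)*}(n)
  = x ∏_p (1 + Σ_{a≥4} (φ(a)/φ*(a) - φ(a-1)/φ*(a-1))/p^a) + O(x^{1/4} log x)`. -/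
theorem phiE_div_phiEStar_partial_sums :
    (fun x : ℝ =>
        (∑ n ∈ Finset.Icc 1 ⌊x⌋₊, (phiE n : ℝ) / (phiEStar n : ℝ)) -
          x * ∏' p : Nat.Primes,
            (1 + ∑' a : ℕ,
              ((Nat.totient (a + 4) : ℝ) / (phiStar (a + 4) : ℝ) -
                  (Nat.totient (a + 3) : ℝ) / (phiStar (a + 3) : ℝ)) /
                ((p : ℕ) : ℝ) ^ (a + 4)))
      =O[Filter.atTop] (fun x : ℝ => x ^ ((1 : ℝ) / 4) * Real.log x) := by
  have hC : (∏' p : Nat.Primes,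
      (1 + ∑' a : ℕ,
        ((Nat.totient (a + 4) : ℝ) / (phiStar (a + 4) : ℝ) -
            (Nat.totient (a + 3) : ℝ) / (phiStar (a + 3) : ℝ)) /
          ((p : ℕ) : ℝ) ^ (a + 4))) = CEE := by
    rw [← euler_tprod]
    exact (tprod_congr (fun p => (euler_factor p).symm))
  rw [Asymptotics.isBigO_iff]
  refine ⟨18 * CF3, ?_⟩
  filter_upwards [Filter.eventually_ge_atTop (3:ℝ)] with x hx3
  have hx2 : (2:ℝ) ≤ x := by linarith
  have hx0 : (0:ℝ) < x := by linarith
  have hlog : 1 ≤ Real.log x := by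
    have h3 : (1:ℝ) ≤ Real.log 3 := by
      rw [Real.le_log_iff_exp_le (by norm_num)]
      have := Real.exp_one_lt_d9
      linarith
    have := Real.log_le_log (by norm_num : (0:ℝ) < 3) hx3
    linarith
  have hu : (0:ℝ) ≤ x ^ ((1:ℝ)/4) := by positivity
  rw [hC]
  have hmain := main_est x hx2
  rw [Real.norm_eq_abs, Real.norm_eq_abs]
  have hRHS : |x ^ ((1:ℝ)/4) * Real.log x| = x ^ ((1:ℝ)/4) * Real.log x := by
    apply abs_of_nonneg
    apply mul_nonneg hu
    linarith
  rw [hRHS]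
  refine hmain.trans ?_
  set u := x ^ ((1:ℝ)/4)
  set L := Real.log x
  have key : CF3 * u * (17 + L) ≤ CF3 * u * (18 * L) := by
    apply mul_le_mul_of_nonneg_left (by linarith) (mul_nonneg CF3_nonneg hu)
  nlinarith [key]
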